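/- Let J be the Jacobian of the linearly-perturbed May–Leonard system at e_c, with α, β > 0 and 0 ≤ μ < 1/6. Then all eigenvalues of J have negative real part if and only if α + β < (6μ+2)/(1-6μ). -/

import Mathlib

open Matrix Complex

/-- For `0 ≤ μ < 1/6` and `α, β > 0`, all the eigenvalues of the Jacobian of
the linearly-perturbed May–Leonard system at `e_c` have negative real part
if and only if `α + β < (6μ+2)/(1-6μ)`. -/
theorem ec_stability_iff (α β μ : ℝ) (hα : 0 < α) (hβ : 0 < β)
    (hμ0 : 0 ≤ μ) (hμ : μ < 1 / 6) :
    let J : Matrix (Fin 3) (Fin 3) ℝ :=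
      (-1 / (1 + α + β)) • !![1, α, β; β, 1, α; α, β, 1] +
        μ • !![-2, 1, 1; 1, -2, 1; 1, 1, -2]
    ((∀ z : ℂ,
        (∃ v : Fin 3 → ℂ, v ≠ 0 ∧ (J.map (Complex.ofReal)).mulVec v = z • v) →
        z.re < 0) ↔ α + β < (6 * μ + 2) / (1 - 6 * μ)) := by
  intro J
  have hJdef : J = (-1 / (1 + α + β)) • !![1, α, β; β, 1, α; α, β, 1] +
        μ • !![(-2:ℝ), 1, 1; 1, -2, 1; 1, 1, -2] := rfl
  have hs : (0:ℝ) < 1 + α + β := by linarith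
  have hs' : (1:ℝ) + α + β ≠ 0 := ne_of_gt hs
  have h6 : (0:ℝ) < 1 - 6*μ := by linarith
  set c0 : ℝ := -1/(1+α+β) - 2*μ with hc0
  set c1 : ℝ := -1/(1+α+β)*α + μ with hc1
  set c2 : ℝ := -1/(1+α+β)*β + μ with hc2
  set ω : ℂ := ⟨-1/2, Real.sqrt 3 / 2⟩ with hωdef
  have ht : (Real.sqrt 3 : ℂ)^2 = 3 := by
    norm_cast
    rw [Real.sq_sqrt] <;> norm_num
  have hωI : ω = -1/2 + (Real.sqrt 3 : ℂ)/2 * Complex.I := by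
    apply Complex.ext <;> simp [hωdef]
  have hω : ω^2 + ω + 1 = 0 := by
    rw [hωI]; linear_combination (Complex.I^2/4) * ht + (3/4) * Complex.I_sq
  have hω3 : ω^3 = 1 := by linear_combination (ω - 1) * hω
  have hωre : ω.re = -1/2 := rfl
  have hω2re : (ω^2).re = -1/2 := by
    have h : ω^2 = -1 - ω := by linear_combination hω
    rw [h]; norm_num [Complex.sub_re, Complex.neg_re, Complex.one_re, hωre]
  have hJ : ∀ v : Fin 3 → ℂ, (J.map (Complex.ofReal)).mulVec v =
      ![ (c0:ℂ)*v 0 + c1*v 1 + c2*v 2,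
         (c2:ℂ)*v 0 + c0*v 1 + c1*v 2,
         (c1:ℂ)*v 0 + c2*v 1 + c0*v 2] := by
    intro v
    funext i
    fin_cases i <;>
    · simp [hJdef, Matrix.mulVec, Matrix.map_apply, dotProduct, Fin.sum_univ_three]
      rw [hc0, hc1, hc2]
      push_cast
      ring
  have hkey : (c0 - (c1+c2)/2 < 0) ↔ α + β < (6 * μ + 2) / (1 - 6 * μ) := by
    have hrepr : c0 - (c1+c2)/2 = ((α+β)*(1-6*μ) - (6*μ+2)) / (2*(1+α+β)) := by
      rw [hc0, hc1, hc2]; field_simp; ring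
    rw [hrepr, lt_div_iff₀ h6]
    constructor
    · intro h
      have hd : (0:ℝ) < 2*(1+α+β) := by linarith
      rw [div_lt_iff₀ hd] at h
      nlinarith
    · intro h
      have hd : (0:ℝ) < 2*(1+α+β) := by linarith
      rw [div_lt_iff₀ hd]
      nlinarith
  constructor
  · intro h
    set z₀ : ℂ := c0 + c1*ω + c2*ω^2 with hz₀
    have hmain : z₀.re < 0 := by
      apply h z₀
      refine ⟨![1, ω, ω^2], ?_, ?_⟩
      · intro hh
        have := congrFun hh 0
        simp at this
      · rw [hJ]
        funext i
        fin_cases i <;> simp [Pi.smul_apply, smul_eq_mul, hz₀]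
        · linear_combination (-(c2:ℂ)) * hω3
        · linear_combination (-(c1:ℂ) - c2*ω) * hω3
    have hre : z₀.re = c0 - (c1+c2)/2 := by
      rw [hz₀]
      simp [Complex.add_re, Complex.mul_re, Complex.ofReal_re, Complex.ofReal_im,
        hωre, hω2re]
      ring
    rw [hre] at hmain
    exact hkey.mp hmain
  · intro hab z hz
    obtain ⟨v, hv0, hveq⟩ := hz
    rw [hJ] at hveq
    have e0 := congrFun hveq 0
    have e1 := congrFun hveq 1
    have e2 := congrFun hveq 2
    simp [Pi.smul_apply, smul_eq_mul] at e0 e1 e2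
    have hab' : c0 - (c1+c2)/2 < 0 := hkey.mpr hab
    have h1 : ((c0:ℂ)+c1+c2 - z) * (v 0 + v 1 + v 2) = 0 := by
      linear_combination e0 + e1 + e2
    have h2 : ((c0:ℂ) + c2*ω + c1*ω^2 - z) * (v 0 + ω*v 1 + ω^2*v 2) = 0 := by
      linear_combination e0 + ω*e1 + ω^2*e2 + (c1*v 1 + (c2 + c1*ω)*v 2)*hω3
    have h3 : ((c0:ℂ) + c1*ω + c2*ω^2 - z) * (v 0 + ω^2*v 1 + ω*v 2) = 0 := by
      linear_combination e0 + ω^2*e1 + ω*e2 + ((c1 + c2*ω)*v 1 + c2*v 2)*hω3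
    by_cases k1 : v 0 + v 1 + v 2 = 0
    · by_cases k2 : v 0 + ω*v 1 + ω^2*v 2 = 0
      · by_cases k3 : v 0 + ω^2*v 1 + ω*v 2 = 0
        · exfalso
          apply hv0
          have hv00 : v 0 = 0 := by
            linear_combination (k1 + k2 + k3)/3 - ((v 1 + v 2)/3) * hω
          have hv01 : v 1 = 0 := by
            linear_combination (k1 + ω^2*k2 + ω*k3)/3 - ((2*v 1 + ω*v 2)/3)*hω3
              - ((v 0 + v 2)/3)*hω
          have hv02 : v 2 = 0 := by
            linear_combination (k1 + ω*k2 + ω^2*k3)/3 - ((2*v 2 + ω*v 1)/3)*hω3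
              - ((v 0 + v 1)/3)*hω
          funext i
          fin_cases i
          · exact hv00
          · exact hv01
          · exact hv02
        · have hz3 : z = (c0:ℂ) + c1*ω + c2*ω^2 := by
            rcases mul_eq_zero.mp h3 with h | h
            · exact (sub_eq_zero.mp h).symm
            · exact absurd h k3
          have hre : z.re = c0 - (c1+c2)/2 := by
            rw [hz3]
            simp [Complex.add_re, Complex.mul_re, Complex.ofReal_re, Complex.ofReal_im,
              hωre, hω2re]
            ring
          rw [hre]; exact hab'
      · have hz2 : z = (c0:ℂ) + c2*ω + c1*ω^2 := by
          rcases mul_eq_zero.mp h2 with h | h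
          · exact (sub_eq_zero.mp h).symm
          · exact absurd h k2
        have hre : z.re = c0 - (c1+c2)/2 := by
          rw [hz2]
          simp [Complex.add_re, Complex.mul_re, Complex.ofReal_re, Complex.ofReal_im,
            hωre, hω2re]
          ring
        rw [hre]; exact hab'
    · have hz1 : z = ((c0+c1+c2 : ℝ) : ℂ) := by
        rcases mul_eq_zero.mp h1 with h | h
        · rw [← sub_eq_zero.mp h]; push_cast; ring
        · exact absurd h k1
      have hsum : c0 + c1 + c2 = -1 := by
        rw [hc0, hc1, hc2]; field_simp; ring
      rw [hz1, hsum]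
      norm_num
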